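/- For all integers a ≥ 4, the complete graph K_a is not C(a,2)-anti-common: the blow-up of a rainbow coloring of K_a yields at least n^a/(a^a − a) + O(n^{a−1}) rainbow copies of K_a in K_n, which exceeds C(n,a)·C(a,2)!/C(a,2)^{C(a,2)}, the count from a random coloring. -/

import Mathlib

open Filter Topology

/-- A copy of `H` (given by an injection `f`) in `K_n` is rainbow under the
edge-coloring `c` if all edges of the copy receive distinct colors. -/
def IsRainbow {m n r : ℕ} (H : SimpleGraph (Fin m)) (c : Sym2 (Fin n) → Fin r)
    (f : Fin m ↪ Fin n) : Prop :=
  ∀ e₁ ∈ H.edgeSet, ∀ e₂ ∈ H.edgeSet, e₁ ≠ e₂ → c (e₁.map ⇑f) ≠ c (e₂.map ⇑f)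

/-- Number of (labeled) rainbow copies of `H` in `K_n` under the coloring `c`. -/
noncomputable def rainbowCount {m n r : ℕ} (H : SimpleGraph (Fin m))
    (c : Sym2 (Fin n) → Fin r) : ℕ :=
  Nat.card {f : Fin m ↪ Fin n // IsRainbow H c f}

/-- `rbL H n r`: the maximum number of labeled rainbow copies of `H` over all
`r`-edge-colorings of `K_n`.  (The labeled count is `|Aut H|` times the number
of rainbow copies `rb_r(H;n)` of the paper.) -/
noncomputable def rbL {m : ℕ} (H : SimpleGraph (Fin m)) (n r : ℕ) : ℕ :=
  sSup (Set.range fun c : Sym2 (Fin n) → Fin r => rainbowCount H c)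

/-- The number of automorphisms of `H`. -/
noncomputable def autCard {m : ℕ} (H : SimpleGraph (Fin m)) : ℕ :=
  Nat.card (H ≃g H)

/-- `rbC H n r`: the maximum proportion of copies of `H` in `K_n` which are rainbow,
i.e. `rb_r(H;n) / (C(n,m)·m!/|Aut(H)|) = rbL H n r / (C(n,m)·m!)`. -/
noncomputable def rbC {m : ℕ} (H : SimpleGraph (Fin m)) (n r : ℕ) : ℝ :=
  (rbL H n r : ℝ) / ((n.choose m) * (m.factorial))



lemma aux_binom (r k : ℕ) : r^(k+1) + (k+1)*r^k ≤ (r+1)^(k+1) := by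
  induction k with
  | zero => simp [pow_succ]
  | succ k ih =>
    have h : (r+1)^(k+2) = (r+1)^(k+1)*(r+1) := by ring
    have he : (r^(k+1) + (k+1)*r^k)*(r+1) = r^(k+2) + (k+2)*r^(k+1) + (k+1)*r^k := by ring
    calc r^(k+2) + (k+2)*r^(k+1) ≤ (r^(k+1) + (k+1)*r^k)*(r+1) := by
          rw [he]; exact Nat.le_add_right _ _
    _ ≤ (r+1)^(k+1)*(r+1) := Nat.mul_le_mul_right _ ih
    _ = (r+1)^(k+2) := h.symm

lemma aux_two_pow (r : ℕ) (hr : 1 ≤ r) : 2 * r^r ≤ (r+1)^r := by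
  obtain ⟨k, rfl⟩ : ∃ k, r = k + 1 := ⟨r - 1, by omega⟩
  have h := aux_binom (k+1) k
  have h2 : (k+1)*(k+1)^k = (k+1)^(k+1) := by ring
  omega

lemma aux_rpow (r : ℕ) (hr : 1 ≤ r) : 2^(r-1) * r.factorial ≤ r^r := by
  induction r with
  | zero => omega
  | succ r ih =>
    rcases Nat.eq_zero_or_pos r with rfl | hr'
    · simp
    · have h1 := ih hr'
      have h2 : 2 * r^r ≤ (r+1)^r := aux_two_pow r hr'
      have h3 : (r+1) - 1 = (r - 1) + 1 := by omega
      rw [h3, pow_succ, Nat.factorial_succ]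
      calc 2^(r-1) * 2 * ((r+1) * r.factorial)
          = (r+1) * (2 * (2^(r-1) * r.factorial)) := by ring
        _ ≤ (r+1) * (2 * r^r) := Nat.mul_le_mul_left _ (Nat.mul_le_mul_left _ h1)
        _ ≤ (r+1) * (r+1)^r := Nat.mul_le_mul_left _ h2
        _ = (r+1)^(r+1) := by ring

lemma choose_two_ge (a : ℕ) (ha : 4 ≤ a) : 6 ≤ a.choose 2 := by
  calc (6:ℕ) = Nat.choose 4 2 := by decide
    _ ≤ a.choose 2 := Nat.choose_le_choose 2 ha

lemma aux_apow (a : ℕ) (ha : 4 ≤ a) : a^a ≤ a.factorial * 2^(a.choose 2 - 1) := by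
  induction a, ha using Nat.le_induction with
  | base => decide
  | succ a ha ih =>
    have h1 := ih
    have hch : (a+1).choose 2 = a + a.choose 2 := by
      rw [Nat.choose_succ_succ]; simp [Nat.choose_one_right]
    have h6 := choose_two_ge a ha
    have hch1 : (a+1).choose 2 - 1 = (a.choose 2 - 1) + a := by omega
    have key : (a+1)^(a+1) ≤ (a+1) * (2^a * a^a) := by
      have h : (a+1)^a ≤ (2*a)^a := Nat.pow_le_pow_left (by omega) a
      calc (a+1)^(a+1) = (a+1)*(a+1)^a := by ring
        _ ≤ (a+1)*(2*a)^a := Nat.mul_le_mul_left _ h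
        _ = (a+1)*(2^a * a^a) := by rw [mul_pow]
    calc (a+1)^(a+1) ≤ (a+1) * (2^a * a^a) := key
      _ ≤ (a+1) * (2^a * (a.factorial * 2^(a.choose 2 - 1))) :=
          Nat.mul_le_mul_left _ (Nat.mul_le_mul_left _ h1)
      _ = (a+1).factorial * 2^((a.choose 2 - 1) + a) := by
          rw [Nat.factorial_succ, pow_add]; ring
      _ = (a+1).factorial * 2^((a+1).choose 2 - 1) := by rw [hch1]

lemma aux_main_ineq (a : ℕ) (ha : 4 ≤ a) :
    (a^a - a) * (a.choose 2).factorial < a.factorial * (a.choose 2)^(a.choose 2) := by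
  have hr1 : 1 ≤ a.choose 2 := by have := choose_two_ge a ha; omega
  calc (a^a - a) * (a.choose 2).factorial < a^a * (a.choose 2).factorial := by
        have h1 : 0 < a^a := Nat.pow_pos (by omega)
        have h2 : a ≤ a^a := Nat.le_self_pow (by omega) a
        exact (Nat.mul_lt_mul_right (Nat.factorial_pos _)).mpr (by omega)
    _ ≤ (a.factorial * 2^(a.choose 2 - 1)) * (a.choose 2).factorial :=
        Nat.mul_le_mul_right _ (aux_apow a ha)
    _ = a.factorial * (2^(a.choose 2 - 1) * (a.choose 2).factorial) := by ring
    _ ≤ a.factorial * (a.choose 2)^(a.choose 2) :=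
        Nat.mul_le_mul_left _ (aux_rpow _ hr1)


-- (x-b)^(k+1) ≥ x^(k+1) - (k+1) b x^k  for 0 ≤ b ≤ x
lemma aux_sub_pow (x b : ℝ) (hb : 0 ≤ b) (hbx : b ≤ x) (k : ℕ) :
    x^(k+1) - (k+1)*b*x^k ≤ (x-b)^(k+1) := by
  have hx : 0 ≤ x := hb.trans hbx
  induction k with
  | zero => simp
  | succ k ih =>
    have h1 : (x-b)^(k+2) = (x-b)*(x-b)^(k+1) := by ring
    have h2 : (x-b)*(x^(k+1) - (k+1)*b*x^k) ≤ (x-b)*(x-b)^(k+1) :=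
      mul_le_mul_of_nonneg_left ih (by linarith)
    have hb2 : (0:ℝ) ≤ ((k:ℝ)+1)*b^2*x^k := by positivity
    have expand : (x-b)*(x^(k+1) - ((k:ℝ)+1)*b*x^k)
        = x^(k+2) - ((k:ℝ)+2)*b*x^(k+1) + ((k:ℝ)+1)*b^2*x^k := by ring
    have h3 : x^(k+2) - ((k:ℝ)+2)*b*x^(k+1) ≤ (x-b)*(x^(k+1) - ((k:ℝ)+1)*b*x^k) := by
      rw [expand]; linarith
    rw [h1] at *
    push_cast
    linarith

-- autCard of complete graph
lemma autCard_complete (a : ℕ) :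
    Nat.card (SimpleGraph.completeGraph (Fin a) ≃g SimpleGraph.completeGraph (Fin a)) = a.factorial := by
  have e : (SimpleGraph.completeGraph (Fin a) ≃g SimpleGraph.completeGraph (Fin a)) ≃ Equiv.Perm (Fin a) :=
    { toFun := fun φ => φ.toEquiv
      invFun := fun σ => ⟨σ, by intro x y; simp [SimpleGraph.completeGraph, σ.injective.ne_iff]⟩
      left_inv := fun φ => rfl
      right_inv := fun σ => rfl }
  rw [Nat.card_congr e, Nat.card_eq_fintype_card, Fintype.card_perm, Fintype.card_fin]

-- kappa
lemma exists_kappa (a : ℕ) (ha : 2 ≤ a) : ∃ κ : Sym2 (Fin a) → Fin (a.choose 2),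
    ∀ e₁ : Sym2 (Fin a), ¬e₁.IsDiag → ∀ e₂ : Sym2 (Fin a), ¬e₂.IsDiag → e₁ ≠ e₂ →
      κ e₁ ≠ κ e₂ := by
  have hcard : Fintype.card {e : Sym2 (Fin a) // ¬e.IsDiag} = a.choose 2 := by
    rw [Sym2.card_subtype_not_diag, Fintype.card_fin]
  have hpos : 0 < a.choose 2 := Nat.choose_pos ha
  obtain ⟨eqv⟩ : Nonempty ({e : Sym2 (Fin a) // ¬e.IsDiag} ≃ Fin (a.choose 2)) :=
    ⟨Fintype.equivFinOfCardEq hcard⟩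
  refine ⟨fun e => if h : e.IsDiag then ⟨0, hpos⟩ else eqv ⟨e, h⟩, ?_⟩
  intro e₁ h₁ e₂ h₂ hne
  simp only [dif_neg h₁, dif_neg h₂]
  intro h
  exact hne (Subtype.mk_eq_mk.mp (eqv.injective h))


lemma rainbowCount_le_rbL {m n r : ℕ} (H : SimpleGraph (Fin m)) (c : Sym2 (Fin n) → Fin r) :
    rainbowCount H c ≤ rbL H n r :=
  le_csSup (Set.Finite.bddAbove (Set.finite_range _)) ⟨c, rfl⟩

lemma exists_optimal {m n r : ℕ} (hr : 0 < r) (H : SimpleGraph (Fin m)) :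
    ∃ c : Sym2 (Fin n) → Fin r, rainbowCount H c = rbL H n r := by
  have : Nonempty (Fin r) := ⟨⟨0, hr⟩⟩
  exact Nat.sSup_mem (Set.range_nonempty _) (Set.Finite.bddAbove (Set.finite_range _))

lemma rbL_mono {m r : ℕ} (H : SimpleGraph (Fin m)) {n n' : ℕ} (hr : 0 < r) (hn : 0 < n)
    (h : n ≤ n') : rbL H n r ≤ rbL H n' r := by
  have : Nonempty (Fin r) := ⟨⟨0, hr⟩⟩
  apply csSup_le (Set.range_nonempty _)
  rintro x ⟨c, rfl⟩
  classical
  set proj : Fin n' → Fin n := fun x => if hx : (x : ℕ) < n then ⟨x, hx⟩ else ⟨0, hn⟩ with hproj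
  set c' : Sym2 (Fin n') → Fin r := fun e => c (e.map proj) with hc'
  have hpc : ∀ i : Fin m, ∀ f : Fin m ↪ Fin n, proj ((f.trans (Fin.castLEEmb h)) i) = f i := by
    intro i f
    simp only [proj, Function.Embedding.trans_apply, Fin.castLEEmb_apply, Fin.coe_castLE]
    rw [dif_pos (f i).isLt]
  have hcomp : ∀ f : Fin m ↪ Fin n, IsRainbow H c f →
      IsRainbow H c' (f.trans (Fin.castLEEmb h)) := by
    intro f hf e₁ he₁ e₂ he₂ hne
    have key : ∀ e : Sym2 (Fin m),
        c' (e.map ⇑(f.trans (Fin.castLEEmb h))) = c (e.map ⇑f) := by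
      intro e
      show c ((e.map _).map proj) = _
      rw [Sym2.map_map]
      congr 1
      exact Sym2.map_congr (fun i _ => hpc i f)
    rw [key, key]
    exact hf e₁ he₁ e₂ he₂ hne
  have hinj : Function.Injective
      (fun f : {f : Fin m ↪ Fin n // IsRainbow H c f} =>
        (⟨f.1.trans (Fin.castLEEmb h), hcomp f.1 f.2⟩ :
          {f : Fin m ↪ Fin n' // IsRainbow H c' f})) := by
    rintro ⟨f, hf⟩ ⟨g, hg⟩ hfg
    simp only [Subtype.mk_eq_mk] at hfg
    apply Subtype.ext
    ext i
    have := congrArg (fun e => ((Function.Embedding.toFun e i : Fin n') : ℕ)) hfg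
    simpa using this
  calc rainbowCount H c ≤ rainbowCount H c' := Nat.card_le_card_of_injective _ hinj
    _ ≤ rbL H n' r := rainbowCount_le_rbL H c'
lemma mem_edgeSet_complete {a : ℕ} {e : Sym2 (Fin a)} :
    e ∈ (SimpleGraph.completeGraph (Fin a)).edgeSet ↔ ¬e.IsDiag := by
  rw [SimpleGraph.completeGraph_eq_top, SimpleGraph.edgeSet_top]; rfl

lemma rbL_key (a m : ℕ) (ha : 4 ≤ a) (hm : 0 < m) :
    a.factorial * m^a + a * rbL (SimpleGraph.completeGraph (Fin a)) m (a.choose 2) ≤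
      rbL (SimpleGraph.completeGraph (Fin a)) (a*m) (a.choose 2) := by
  classical
  have hr : 0 < a.choose 2 := Nat.choose_pos (by omega)
  obtain ⟨κ, hκ⟩ := exists_kappa a (by omega)
  obtain ⟨c₀, hc₀⟩ := exists_optimal (n := m) hr (SimpleGraph.completeGraph (Fin a))
  set K := SimpleGraph.completeGraph (Fin a) with hK
  -- bounds
  have hdivlt : ∀ x : Fin (a*m), (x : ℕ)/m < a := fun x =>
    (Nat.div_lt_iff_lt_mul hm).mpr x.isLt
  have hmodlt : ∀ x : Fin (a*m), (x : ℕ) % m < m := fun _ => Nat.mod_lt _ hm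
  set col : Fin (a*m) → Fin (a*m) → Fin (a.choose 2) := fun x y =>
    if (x:ℕ)/m = (y:ℕ)/m
    then c₀ s(⟨(x:ℕ)%m, hmodlt x⟩, ⟨(y:ℕ)%m, hmodlt y⟩)
    else κ s(⟨(x:ℕ)/m, hdivlt x⟩, ⟨(y:ℕ)/m, hdivlt y⟩) with hcol
  have hsymm : ∀ x y, col x y = col y x := by
    intro x y
    rcases eq_or_ne ((x:ℕ)/m) ((y:ℕ)/m) with hxy | hxy
    · simp only [hcol]
      rw [if_pos hxy, if_pos hxy.symm]
      exact congrArg c₀ Sym2.eq_swap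
    · simp only [hcol]
      rw [if_neg hxy, if_neg hxy.symm]
      exact congrArg κ Sym2.eq_swap
  set c : Sym2 (Fin (a*m)) → Fin (a.choose 2) := Sym2.lift ⟨col, hsymm⟩ with hc
  -- vertex construction
  have hbound : ∀ (p : Fin a) (x : Fin m), (x : ℕ) + (p : ℕ) * m < a * m := by
    intro p x
    have h1 : (x : ℕ) + (p : ℕ) * m < ((p:ℕ)+1) * m := by
      have := x.isLt; nlinarith
    have h2 : ((p:ℕ)+1) * m ≤ a * m := Nat.mul_le_mul_right m p.isLt
    omega
  set vtx : Fin a → Fin m → Fin (a*m) := fun p x => ⟨(x:ℕ) + (p:ℕ)*m, hbound p x⟩ with hvtx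
  have hdiv : ∀ (p : Fin a) (x : Fin m), ((vtx p x : Fin (a*m)) : ℕ)/m = p := by
    intro p x
    show ((x:ℕ) + (p:ℕ)*m)/m = p
    rw [Nat.add_mul_div_right _ _ hm, Nat.div_eq_of_lt x.isLt, Nat.zero_add]
  have hmod : ∀ (p : Fin a) (x : Fin m), ((vtx p x : Fin (a*m)) : ℕ) % m = x := by
    intro p x
    show ((x:ℕ) + (p:ℕ)*m) % m = x
    rw [Nat.add_mul_mod_self_right, Nat.mod_eq_of_lt x.isLt]
  have hvtxinj : ∀ p p' x x', vtx p x = vtx p' x' → p = p' ∧ x = x' := by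
    intro p p' x x' hpx
    have h1 := (hdiv p x).symm.trans ((congrArg (fun z : Fin (a*m) => (z:ℕ)/m) hpx).trans (hdiv p' x'))
    have h2 := (hmod p x).symm.trans ((congrArg (fun z : Fin (a*m) => (z:ℕ)%m) hpx).trans (hmod p' x'))
    exact ⟨Fin.ext h1, Fin.ext h2⟩
  -- left family: transversal copies
  have leftemb : ∀ (σ : Equiv.Perm (Fin a)) (g : Fin a → Fin m),
      Function.Injective (fun i => vtx (σ i) (g i)) := by
    intro σ g i j hij
    exact σ.injective ((hvtxinj _ _ _ _ hij).1)
  have leftrb : ∀ (σ : Equiv.Perm (Fin a)) (g : Fin a → Fin m),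
      IsRainbow K c ⟨fun i => vtx (σ i) (g i), leftemb σ g⟩ := by
    intro σ g
    have ceval : ∀ e : Sym2 (Fin a), ¬ e.IsDiag →
        c (e.map (fun i => vtx (σ i) (g i))) = κ (e.map σ) := by
      intro e
      induction e with
      | _ i j =>
        intro hd
        have hij : i ≠ j := by simpa [Sym2.mk_isDiag_iff] using hd
        rw [Sym2.map_pair_eq, Sym2.map_pair_eq]
        show col (vtx (σ i) (g i)) (vtx (σ j) (g j)) = _
        simp only [hcol]
        have hne : ((vtx (σ i) (g i) : Fin (a*m)) : ℕ)/m ≠ ((vtx (σ j) (g j) : Fin (a*m)) : ℕ)/m := by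
          rw [hdiv, hdiv]
          exact fun hh => hij (σ.injective (Fin.ext hh))
        rw [if_neg hne]
        congr 1
        rw [Sym2.eq_iff]
        left
        exact ⟨Fin.ext (hdiv _ _), Fin.ext (hdiv _ _)⟩
    intro e₁ he₁ e₂ he₂ hne
    rw [hK, mem_edgeSet_complete] at he₁ he₂
    show c (e₁.map _) ≠ c (e₂.map _)
    simp only [Function.Embedding.coeFn_mk]
    rw [ceval e₁ he₁, ceval e₂ he₂]
    apply hκ
    · rw [Sym2.isDiag_map σ.injective]; exact he₁
    · rw [Sym2.isDiag_map σ.injective]; exact he₂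
    · exact fun hh => hne (Sym2.map.injective σ.injective hh)
  -- right family: inner copies
  have rightemb : ∀ (p : Fin a) (g : Fin a ↪ Fin m),
      Function.Injective (fun i => vtx p (g i)) := by
    intro p g i j hij
    exact g.injective ((hvtxinj _ _ _ _ hij).2)
  have rightrb : ∀ (p : Fin a) (g : Fin a ↪ Fin m), IsRainbow K c₀ g →
      IsRainbow K c ⟨fun i => vtx p (g i), rightemb p g⟩ := by
    intro p g hg
    have ceval : ∀ e : Sym2 (Fin a),
        c (e.map (fun i => vtx p (g i))) = c₀ (e.map ⇑g) := by
      intro e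
      induction e with
      | _ i j =>
        rw [Sym2.map_pair_eq, Sym2.map_pair_eq]
        show col (vtx p (g i)) (vtx p (g j)) = _
        simp only [hcol]
        rw [if_pos (by rw [hdiv, hdiv])]
        congr 1
        rw [Sym2.eq_iff]
        left
        exact ⟨Fin.ext (hmod _ _), Fin.ext (hmod _ _)⟩
    intro e₁ he₁ e₂ he₂ hne
    show c (e₁.map _) ≠ c (e₂.map _)
    simp only [Function.Embedding.coeFn_mk]
    rw [ceval e₁, ceval e₂]
    exact hg e₁ he₁ e₂ he₂ hne
  -- the injection
  set Φ : (Equiv.Perm (Fin a) × (Fin a → Fin m)) ⊕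
      (Fin a × {g : Fin a ↪ Fin m // IsRainbow K c₀ g}) →
      {f : Fin a ↪ Fin (a*m) // IsRainbow K c f} := fun u =>
    match u with
    | Sum.inl (σ, g) => ⟨⟨fun i => vtx (σ i) (g i), leftemb σ g⟩, leftrb σ g⟩
    | Sum.inr (p, g) => ⟨⟨fun i => vtx p (g.1 i), rightemb p g.1⟩, rightrb p g.1 g.2⟩
    with hΦ
  have hΦval : ∀ u i, ((Φ u).1 i : ℕ) =
      (match u with
       | Sum.inl (σ, g) => ((g i : ℕ) + (σ i : ℕ) * m)
       | Sum.inr (p, g) => ((g.1 i : ℕ) + (p : ℕ) * m)) := by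
    intro u i
    cases u with
    | inl u => rfl
    | inr u => rfl
  have h01 : (⟨0, by omega⟩ : Fin a) ≠ ⟨1, by omega⟩ := by
    simp [Fin.ext_iff]
  have hΦinj : Function.Injective Φ := by
    intro u v huv
    have hval : ∀ i, ((Φ u).1 i : Fin (a*m)) = ((Φ v).1 i : Fin (a*m)) := by
      intro i
      rw [huv]
    cases u with
    | inl u =>
      obtain ⟨σ, g⟩ := u
      cases v with
      | inl v =>
        obtain ⟨σ', g'⟩ := v
        have key : ∀ i, σ i = σ' i ∧ g i = g' i := fun i => hvtxinj _ _ _ _ (hval i)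
        congr 1
        exact Prod.ext (Equiv.ext fun i => (key i).1) (funext fun i => (key i).2)
      | inr v =>
        obtain ⟨p, g'⟩ := v
        exfalso
        have k0 := (hvtxinj _ _ _ _ (hval ⟨0, by omega⟩)).1
        have k1 := (hvtxinj _ _ _ _ (hval ⟨1, by omega⟩)).1
        exact h01 (σ.injective (k0.trans k1.symm))
    | inr u =>
      obtain ⟨p, g⟩ := u
      cases v with
      | inl v =>
        obtain ⟨σ, g'⟩ := v
        exfalso
        have k0 := (hvtxinj _ _ _ _ (hval ⟨0, by omega⟩)).1
        have k1 := (hvtxinj _ _ _ _ (hval ⟨1, by omega⟩)).1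
        exact h01 (σ.injective (k0.symm.trans k1))
      | inr v =>
        obtain ⟨p', g'⟩ := v
        have key : ∀ i, p = p' ∧ g.1 i = g'.1 i := fun i =>
          ⟨(hvtxinj _ _ _ _ (hval i)).1, (hvtxinj _ _ _ _ (hval i)).2⟩
        congr 1
        refine Prod.ext (key ⟨0, by omega⟩).1 (Subtype.ext (by ext i; exact congrArg Fin.val (key i).2))
  -- count
  have hcount := Nat.card_le_card_of_injective Φ hΦinj
  have hsum : Nat.card ((Equiv.Perm (Fin a) × (Fin a → Fin m)) ⊕
      (Fin a × {g : Fin a ↪ Fin m // IsRainbow K c₀ g}))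
      = a.factorial * m^a + a * rainbowCount K c₀ := by
    rw [Nat.card_sum, Nat.card_prod, Nat.card_prod]
    congr 1
    · congr 1
      · rw [Nat.card_eq_fintype_card, Fintype.card_perm, Fintype.card_fin]
      · rw [Nat.card_eq_fintype_card, Fintype.card_fun, Fintype.card_fin, Fintype.card_fin]
    · congr 1
      rw [Nat.card_eq_fintype_card, Fintype.card_fin]
  rw [hsum] at hcount
  rw [hc₀] at hcount
  calc a.factorial * m^a + a * rbL K m (a.choose 2)
      ≤ rainbowCount K c := hcount
    _ ≤ rbL K (a*m) (a.choose 2) := rainbowCount_le_rbL K c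

lemma autCard_eq (a : ℕ) : autCard (SimpleGraph.completeGraph (Fin a)) = a.factorial :=
  autCard_complete a
lemma aux_core (A c2 P Q Y xa : ℝ) (hA : 1 ≤ A) (hP : 0 ≤ P) (hQ : 0 ≤ Q) (hc2 : 0 ≤ c2)
    (hY : xa - c2*P ≤ Y) (hPQ : 16*Q ≤ P) :
    xa - A*(2*c2)*P ≤ Y - A*(2*c2)*Q := by
  have h1 : 0 ≤ (A*c2)*(P - 16*Q) := mul_nonneg (mul_nonneg (by linarith) hc2) (by linarith)
  have h2 : 0 ≤ ((A-1)*c2)*P := mul_nonneg (mul_nonneg (by linarith) hc2) hP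
  have h3 : 0 ≤ c2*P := mul_nonneg hc2 hP
  nlinarith [h1, h2, h3]

lemma hA_one (a : ℕ) (ha : 4 ≤ a) : 1 ≤ (a:ℝ)^a - a := by
  have ha4 : (4:ℝ) ≤ (a:ℝ) := by exact_mod_cast ha
  have h2 : (a:ℝ)^2 ≤ (a:ℝ)^a := pow_le_pow_right₀ (by linarith) (by omega)
  nlinarith

lemma rbL_lower (a : ℕ) (ha : 4 ≤ a) (n : ℕ) :
    (a.factorial : ℝ) * ((n:ℝ)^a - ((a:ℝ)^a - a) * (2*(a:ℝ)^2) * (n:ℝ)^(a-1)) ≤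
      ((a:ℝ)^a - a) * (rbL (SimpleGraph.completeGraph (Fin a)) n (a.choose 2) : ℝ) := by
  have ha4 : (4:ℝ) ≤ (a:ℝ) := by exact_mod_cast ha
  have hA1 : 1 ≤ (a:ℝ)^a - a := hA_one a ha
  set A : ℝ := (a:ℝ)^a - a with hA
  induction n using Nat.strong_induction_on with
  | _ n ih =>
    rcases Nat.lt_or_ge n a with hna | hna
    · -- base case
      have hxa : ((n:ℝ))^a = (n:ℝ)^(a-1) * n := by
        conv_lhs => rw [show a = (a-1)+1 by omega]
        rw [pow_succ]
      have hxle : (n:ℝ) ≤ A * (2*(a:ℝ)^2) := by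
        have hn : (n:ℝ) ≤ (a:ℝ) := by exact_mod_cast hna.le
        nlinarith
      have hnonpos : (n:ℝ)^a - A * (2*(a:ℝ)^2) * (n:ℝ)^(a-1) ≤ 0 := by
        rw [hxa]
        have hp : (0:ℝ) ≤ (n:ℝ)^(a-1) := by positivity
        nlinarith
      have hfac : (0:ℝ) ≤ (a.factorial : ℝ) := by positivity
      have hrb : (0:ℝ) ≤ (rbL (SimpleGraph.completeGraph (Fin a)) n (a.choose 2) : ℝ) := by positivity
      nlinarith
    · -- inductive step
      set m := n / a with hmdef
      have hda := Nat.div_add_mod n a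
      rw [← hmdef] at hda
      have hmod := Nat.mod_lt n (show 0 < a by omega)
      have ham : a * m ≤ n := by omega
      have hma : n < a * m + a := by omega
      have hm1 : 1 ≤ m := (Nat.one_le_div_iff (by omega)).mpr hna
      have hmn : m < n := Nat.div_lt_self (by omega) (by omega)
      have step1 := rbL_mono (SimpleGraph.completeGraph (Fin a)) (Nat.choose_pos (show 2 ≤ a by omega))
        (Nat.mul_pos (by omega) (by omega)) ham
      have step2 := rbL_key a m ha (by omega)
      have ihm := ih m hmn
      -- cast to ℝ
      have c1 : ((a.factorial * m^a + a * rbL (SimpleGraph.completeGraph (Fin a)) m (a.choose 2) : ℕ) : ℝ)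
          ≤ (rbL (SimpleGraph.completeGraph (Fin a)) n (a.choose 2) : ℝ) := by
        exact_mod_cast step2.trans step1
      push_cast at c1
      have hA0 : (0:ℝ) ≤ A := by linarith
      -- combine with ihm
      have comb : (a.factorial:ℝ) * (((a:ℝ)*m)^a - A * (2*(a:ℝ)^2) * ((a:ℝ)*(m:ℝ)^(a-1)))
          ≤ A * (rbL (SimpleGraph.completeGraph (Fin a)) n (a.choose 2) : ℝ) := by
        have e1 : A * ((a.factorial:ℝ) * (m:ℝ)^a + (a:ℝ) * (rbL (SimpleGraph.completeGraph (Fin a)) m (a.choose 2) : ℝ))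
            ≤ A * (rbL (SimpleGraph.completeGraph (Fin a)) n (a.choose 2) : ℝ) := mul_le_mul_of_nonneg_left c1 hA0
        have e2 : (a:ℝ) * ((a.factorial:ℝ) * ((m:ℝ)^a - A * (2*(a:ℝ)^2) * (m:ℝ)^(a-1)))
            ≤ (a:ℝ) * (A * (rbL (SimpleGraph.completeGraph (Fin a)) m (a.choose 2) : ℝ)) :=
          mul_le_mul_of_nonneg_left ihm (by positivity)
        have e3 : ((a:ℝ)*(m:ℝ))^a = (A + a) * (m:ℝ)^a := by
          rw [mul_pow, hA]; ring
        nlinarith [e1, e2]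
      -- core bound
      have hx0 : (0:ℝ) ≤ (n:ℝ) - a := by
        have : (a:ℝ) ≤ (n:ℝ) := by exact_mod_cast hna
        linarith
      have f1 : (n:ℝ) - a ≤ (a:ℝ)*m := by
        have : (n:ℝ) < (a:ℝ)*m + a := by exact_mod_cast hma
        linarith
      have f2 : ((n:ℝ) - a)^a ≤ ((a:ℝ)*m)^a := pow_le_pow_left₀ hx0 f1 a
      have f3 : (n:ℝ)^a - (a:ℝ)*(a:ℝ)*(n:ℝ)^(a-1) ≤ ((n:ℝ) - a)^a := by
        obtain ⟨k, hk⟩ : ∃ k, a = k + 1 := ⟨a - 1, by omega⟩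
        have := aux_sub_pow (n:ℝ) (a:ℝ) (by positivity) (by exact_mod_cast hna) k
        have hca : ((k:ℝ)+1) = (a:ℝ) := by rw [hk]; push_cast; ring
        rw [hca] at this
        have hk1 : a - 1 = k := by omega
        rw [← hk, ← hk1] at this
        linarith [this]
      have f4 : ((a:ℝ)*m)^(a-1) ≤ (n:ℝ)^(a-1) := by
        apply pow_le_pow_left₀ (by positivity)
        exact_mod_cast ham
      have f5 : (16:ℝ) ≤ (a:ℝ)^(a-2) := by
        calc (16:ℝ) = 4^2 := by norm_num
          _ ≤ (4:ℝ)^(a-2) := pow_le_pow_right₀ (by norm_num) (by omega)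
          _ ≤ (a:ℝ)^(a-2) := pow_le_pow_left₀ (by norm_num) ha4 _
      have f6 : 16*((a:ℝ)*(m:ℝ)^(a-1)) ≤ (n:ℝ)^(a-1) := by
        have e : ((a:ℝ)*m)^(a-1) = (a:ℝ)^(a-2) * ((a:ℝ)*(m:ℝ)^(a-1)) := by
          rw [mul_pow]
          rw [show a - 1 = (a-2)+1 by omega, pow_succ]
          ring
        have hq : (0:ℝ) ≤ (a:ℝ)*(m:ℝ)^(a-1) := by positivity
        nlinarith [f4, f5, hq]
      have hY' : (n:ℝ)^a - (a:ℝ)^2*(n:ℝ)^(a-1) ≤ ((a:ℝ)*(m:ℝ))^a := by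
        rw [sq (a:ℝ)]; linarith [f2, f3]
      have p1 : (0:ℝ) ≤ (n:ℝ)^(a-1) := by positivity
      have p2 : (0:ℝ) ≤ (a:ℝ)*(m:ℝ)^(a-1) := by positivity
      have p3 : (0:ℝ) ≤ (a:ℝ)^2 := by positivity
      have hcore := aux_core A ((a:ℝ)^2) ((n:ℝ)^(a-1)) ((a:ℝ)*(m:ℝ)^(a-1)) (((a:ℝ)*(m:ℝ))^a)
        ((n:ℝ)^a) hA1 p1 p2 p3 hY' f6
      have hfac : (0:ℝ) ≤ (a.factorial : ℝ) := by positivity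
      calc (a.factorial : ℝ) * ((n:ℝ)^a - A * (2*(a:ℝ)^2) * (n:ℝ)^(a-1))
          ≤ (a.factorial:ℝ) * (((a:ℝ)*m)^a - A * (2*(a:ℝ)^2) * ((a:ℝ)*(m:ℝ)^(a-1))) := by
            apply mul_le_mul_of_nonneg_left _ hfac
            linarith [hcore]
        _ ≤ A * (rbL (SimpleGraph.completeGraph (Fin a)) n (a.choose 2) : ℝ) := comb
theorem stmt14 (a : ℕ) (ha : 4 ≤ a) :
    (∃ C : ℝ, ∃ N : ℕ, ∀ n ≥ N,
      (rbL (SimpleGraph.completeGraph (Fin a)) n (a.choose 2) : ℝ) / autCard (SimpleGraph.completeGraph (Fin a))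
        ≥ (n : ℝ) ^ a / ((a : ℝ) ^ a - a) - C * (n : ℝ) ^ (a - 1)) ∧
    ¬ Tendsto (fun n => rbC (SimpleGraph.completeGraph (Fin a)) n (a.choose 2)) atTop
        (𝓝 (((a.choose 2).factorial : ℝ) / ((a.choose 2 : ℝ) ^ (a.choose 2)))) := by
  have hA1 : 1 ≤ (a:ℝ)^a - a := hA_one a ha
  set A : ℝ := (a:ℝ)^a - a with hA
  have hApos : (0:ℝ) < A := by linarith
  have hfacpos : (0:ℝ) < (a.factorial : ℝ) := by positivity
  set C : ℝ := 2*(a:ℝ)^2 with hC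
  have haR : (4:ℝ) ≤ (a:ℝ) := by exact_mod_cast ha
  have hCpos : (0:ℝ) < C := by rw [hC]; positivity
  have hlow : ∀ n : ℕ, (a.factorial:ℝ) * ((n:ℝ)^a/A - C * (n:ℝ)^(a-1)) ≤
      (rbL (SimpleGraph.completeGraph (Fin a)) n (a.choose 2) : ℝ) := by
    intro n
    have h := rbL_lower a ha n
    rw [← hA, ← hC] at h
    have e2 : ((n:ℝ)^a/A - C*(n:ℝ)^(a-1)) = ((n:ℝ)^a - A*C*(n:ℝ)^(a-1))/A := by
      field_simp
    have e : (a.factorial:ℝ) * ((n:ℝ)^a/A - C*(n:ℝ)^(a-1)) =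
        ((a.factorial:ℝ) * ((n:ℝ)^a - A*C*(n:ℝ)^(a-1)))/A := by
      rw [e2, mul_div_assoc]
    rw [e, div_le_iff₀ hApos]
    nlinarith [h]
  constructor
  · refine ⟨C, 0, fun n _ => ?_⟩
    rw [autCard_eq a, ge_iff_le, le_div_iff₀ hfacpos]
    calc ((n:ℝ)^a/A - C*(n:ℝ)^(a-1)) * (a.factorial:ℝ)
        = (a.factorial:ℝ) * ((n:ℝ)^a/A - C*(n:ℝ)^(a-1)) := mul_comm _ _
      _ ≤ _ := hlow n
  · intro hT
    have hr6 : 6 ≤ a.choose 2 := choose_two_ge a ha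
    have hrR : (6:ℝ) ≤ ((a.choose 2 : ℕ):ℝ) := by exact_mod_cast hr6
    have hrpow : (0:ℝ) < ((a.choose 2:ℕ):ℝ)^(a.choose 2) := by positivity
    have hgt : ((a.choose 2).factorial : ℝ) / ((a.choose 2 : ℝ) ^ (a.choose 2))
        < (a.factorial:ℝ)/A := by
      rw [div_lt_div_iff₀ hrpow hApos]
      have h2 := aux_main_ineq a ha
      have h3 : (((a^a - a) * (a.choose 2).factorial : ℕ):ℝ)
          < ((a.factorial * (a.choose 2)^(a.choose 2) : ℕ):ℝ) := by exact_mod_cast h2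
      have hcast : ((a^a - a : ℕ):ℝ) = A := by
        rw [hA, Nat.cast_sub (Nat.le_self_pow (by omega) a)]
        push_cast
        ring
      push_cast [hcast] at h3
      nlinarith [h3]
    have hzero := tendsto_const_div_atTop_nhds_zero_nat ((a.factorial:ℝ)*C)
    have hfn : Tendsto (fun n : ℕ => (a.factorial:ℝ)/A - (a.factorial:ℝ)*C/n) atTop
        (𝓝 ((a.factorial:ℝ)/A)) := by
      have h : Tendsto (fun n : ℕ => (a.factorial:ℝ)/A - (a.factorial:ℝ)*C/n) atTop
          (𝓝 ((a.factorial:ℝ)/A - 0)) := Tendsto.sub tendsto_const_nhds hzero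
      simpa using h
    have hev : ∀ᶠ n : ℕ in atTop,
        (a.factorial:ℝ)/A - (a.factorial:ℝ)*C/n ≤ rbC (SimpleGraph.completeGraph (Fin a)) n (a.choose 2) := by
      rw [eventually_atTop]
      refine ⟨a + Nat.ceil (A*C) + 1, fun n hn => ?_⟩
      have hna : a ≤ n := by omega
      have hn1 : 1 ≤ n := by omega
      have hxpos : (0:ℝ) < (n:ℝ) := by exact_mod_cast hn1
      have hAC : A*C ≤ (n:ℝ) := by
        have h1 : A*C ≤ (Nat.ceil (A*C) : ℝ) := Nat.le_ceil _
        have h2 : ((Nat.ceil (A*C) : ℕ):ℝ) ≤ (n:ℝ) := by exact_mod_cast (by omega : Nat.ceil (A*C) ≤ n)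
        linarith
      have hppos : (0:ℝ) < (n:ℝ)^(a-1) := by positivity
      have hxa : (n:ℝ)^a = (n:ℝ)^(a-1)*(n:ℝ) := by
        conv_lhs => rw [show a = (a-1)+1 by omega]
        rw [pow_succ]
      have hnum0 : 0 ≤ (n:ℝ)^a/A - C*(n:ℝ)^(a-1) := by
        rw [sub_nonneg, le_div_iff₀ hApos, hxa]
        nlinarith [mul_le_mul_of_nonneg_left hAC hppos.le]
      have hden_pos : (0:ℝ) < (n.choose a : ℝ) * (a.factorial:ℝ) := by
        have h := Nat.choose_pos hna
        have : (0:ℝ) < (n.choose a : ℝ) := by exact_mod_cast h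
        exact mul_pos this hfacpos
      have hden_le : (n.choose a : ℝ)*(a.factorial:ℝ) ≤ (n:ℝ)^a := by
        have h1 : n.choose a * a.factorial ≤ n^a := by
          rw [mul_comm, ← Nat.descFactorial_eq_factorial_mul_choose]
          exact Nat.descFactorial_le_pow n a
        exact_mod_cast h1
      have hnum := hlow n
      have step1 : ((a.factorial:ℝ)*((n:ℝ)^a/A - C*(n:ℝ)^(a-1)))/((n.choose a : ℝ)*(a.factorial:ℝ))
          ≤ rbC (SimpleGraph.completeGraph (Fin a)) n (a.choose 2) := by
        unfold rbC
        exact (div_le_div_iff_of_pos_right hden_pos).mpr hnum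
      have e : (a.factorial:ℝ)/A - (a.factorial:ℝ)*C/(n:ℝ) =
          ((a.factorial:ℝ)*((n:ℝ)^a/A - C*(n:ℝ)^(a-1)))/((n:ℝ)^a) := by
        rw [hxa]
        field_simp
      have step0 : (a.factorial:ℝ)/A - (a.factorial:ℝ)*C/(n:ℝ) ≤
          ((a.factorial:ℝ)*((n:ℝ)^a/A - C*(n:ℝ)^(a-1)))/((n.choose a : ℝ)*(a.factorial:ℝ)) := by
        rw [e]
        exact div_le_div_of_nonneg_left (mul_nonneg hfacpos.le hnum0) hden_pos hden_le
      linarith [step0, step1]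
    have hle := le_of_tendsto_of_tendsto hfn hT hev
    linarith [hgt, hle]
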